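/- For every τ in the upper half-plane with √3/2 ≤ Im τ ≤ 1.5, one has |(Δ(τ) − q)/q²| < 23546, where q = e^{2πiτ}. -/

import Mathlib

open Complex

noncomputable section

/-- `sigma' k n = ∑_{d ∣ n} d^k`, the sum of the k-th powers of the positive divisors of n. -/
def sigma' (k n : ℕ) : ℕ := ∑ d ∈ n.divisors, d ^ k

/-- `qpar τ = e^{2πiτ}`. -/
def qpar (τ : ℂ) : ℂ := Complex.exp (2 * Real.pi * Complex.I * τ)

/-- The quasimodular Eisenstein series `E₂(τ) = 1 - 24 ∑_{n≥1} σ₁(n) qⁿ`. -/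
def E2 (τ : ℂ) : ℂ := 1 - 24 * ∑' n : ℕ, (sigma' 1 (n + 1) : ℂ) * qpar τ ^ (n + 1)

/-- The Eisenstein series `E₄(τ) = 1 + 240 ∑_{n≥1} σ₃(n) qⁿ`. -/
def E4 (τ : ℂ) : ℂ := 1 + 240 * ∑' n : ℕ, (sigma' 3 (n + 1) : ℂ) * qpar τ ^ (n + 1)

/-- The Eisenstein series `E₆(τ) = 1 - 504 ∑_{n≥1} σ₅(n) qⁿ`. -/
def E6 (τ : ℂ) : ℂ := 1 - 504 * ∑' n : ℕ, (sigma' 5 (n + 1) : ℂ) * qpar τ ^ (n + 1)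

/-- The modular discriminant `Δ = (E₄³ - E₆²)/1728`. -/
def Δ' (τ : ℂ) : ℂ := (E4 τ ^ 3 - E6 τ ^ 2) / 1728

/-- The modular j-invariant `j = E₄³/Δ`. -/
def jinv (τ : ℂ) : ℂ := E4 τ ^ 3 / Δ' τ

/-- `χ = E₂E₄E₆/Δ`. -/
def χ' (τ : ℂ) : ℂ := E2 τ * E4 τ * E6 τ / Δ' τ

/-- `ξ = E₄E₆/Δ`. -/
def ξ' (τ : ℂ) : ℂ := E4 τ * E6 τ / Δ' τ

/-- The almost holomorphic modular function `χ*(τ) = χ(τ) - (3/(π Im τ)) ξ(τ)`. -/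
def χstar (τ : ℂ) : ℂ := χ' τ - (3 / (Real.pi * τ.im) : ℝ) * ξ' τ

/-- `τ` lies in the upper half-plane and satisfies `aτ² + bτ + c = 0` where
`a > 0` and `gcd(a,b,c) = 1`. -/
def QuadPoint (τ : ℂ) (a b c : ℤ) : Prop :=
  0 < τ.im ∧ 0 < a ∧ Int.gcd (Int.gcd a b) c = 1 ∧
    (a : ℂ) * τ ^ 2 + (b : ℂ) * τ + (c : ℂ) = 0

/-- `τ` is a quadratic point of the upper half-plane. -/
def IsQuadratic (τ : ℂ) : Prop := ∃ a b c : ℤ, QuadPoint τ a b c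

/-- `τ` is a quadratic point of discriminant `D = b² - 4ac`. -/
def HasDisc (τ : ℂ) (D : ℤ) : Prop :=
  ∃ a b c : ℤ, QuadPoint τ a b c ∧ D = b ^ 2 - 4 * a * c

/-- Membership in the closed standard fundamental domain
`F = {z ∈ ℍ : |z| ≥ 1, -1/2 ≤ Re z ≤ 1/2}`. -/
def inF (τ : ℂ) : Prop :=
  0 < τ.im ∧ 1 ≤ ‖τ‖ ∧ -(1 / 2) ≤ τ.re ∧ τ.re ≤ 1 / 2

/-- `τ` and `τ'` lie in the same `SL₂(ℤ)`-orbit under Möbius transformations. -/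
def MoebiusEquiv (τ τ' : ℂ) : Prop :=
  ∃ γ : Matrix.SpecialLinearGroup (Fin 2) ℤ,
    τ' = ((γ.1 0 0 : ℂ) * τ + (γ.1 0 1 : ℂ)) / ((γ.1 1 0 : ℂ) * τ + (γ.1 1 1 : ℂ))

lemma sigma'_one (k : ℕ) : sigma' k 1 = 1 := by simp [sigma']

lemma sigma'_le (k n : ℕ) : sigma' k (n + 1) ≤ (2 ^ (k + 1)) ^ n := by
  have h1 : sigma' k (n + 1) ≤ (n + 1) ^ (k + 1) := by
    have hsub : (n + 1).divisors ⊆ Finset.Icc 1 (n + 1) := by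
      intro d hd
      rw [Nat.mem_divisors] at hd
      exact Finset.mem_Icc.2 ⟨Nat.pos_of_dvd_of_pos hd.1 (Nat.succ_pos n),
        Nat.le_of_dvd (Nat.succ_pos n) hd.1⟩
    calc sigma' k (n + 1) ≤ ∑ d ∈ Finset.Icc 1 (n + 1), d ^ k :=
          Finset.sum_le_sum_of_subset hsub
      _ ≤ (Finset.Icc 1 (n + 1)).card • (n + 1) ^ k :=
          Finset.sum_le_card_nsmul _ _ _ (fun d hd => Nat.pow_le_pow_left (Finset.mem_Icc.1 hd).2 k)
      _ = (n + 1) * (n + 1) ^ k := by simp [Nat.card_Icc]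
      _ = (n + 1) ^ (k + 1) := by rw [pow_succ, Nat.mul_comm]
  have h2 : (n + 1) ^ (k + 1) ≤ (2 ^ (k + 1)) ^ n := by
    calc (n + 1) ^ (k + 1) ≤ (2 ^ n) ^ (k + 1) :=
          Nat.pow_le_pow_left (Nat.lt_two_pow_self (n := n)) _
      _ = (2 ^ (k + 1)) ^ n := by rw [← pow_mul, ← pow_mul, Nat.mul_comm]
  exact le_trans h1 h2

lemma tsum_bounds (k : ℕ) (q : ℂ) (c : ℝ) (hc : (2:ℝ) ^ (k + 1) * ‖q‖ ≤ c)
    (hc1 : c < 1) :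
    ‖(∑' n : ℕ, ((sigma' k (n + 1) : ℂ) * q ^ (n + 1))) - q‖
      ≤ ‖q‖ * c / (1 - c) ∧
    ‖∑' n : ℕ, ((sigma' k (n + 1) : ℂ) * q ^ (n + 1))‖ ≤ ‖q‖ / (1 - c) := by
  have hc0 : 0 ≤ c := le_trans (by positivity) hc
  set r : ℝ := ‖q‖ with hr
  have hr0 : 0 ≤ r := norm_nonneg q
  set f : ℕ → ℂ := fun n => (sigma' k (n + 1) : ℂ) * q ^ (n + 1) with hf
  have hterm : ∀ n : ℕ, ‖f n‖ ≤ r * c ^ n := by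
    intro n
    rw [hf]
    simp only [norm_mul, norm_pow, Complex.norm_natCast]
    calc (sigma' k (n + 1) : ℝ) * r ^ (n + 1)
        ≤ ((2 ^ (k + 1)) ^ n : ℕ) * r ^ (n + 1) := by
          apply mul_le_mul_of_nonneg_right _ (by positivity)
          exact_mod_cast sigma'_le k n
      _ = r * ((2:ℝ) ^ (k + 1) * r) ^ n := by push_cast; ring
      _ ≤ r * c ^ n := by
          apply mul_le_mul_of_nonneg_left _ hr0
          exact pow_le_pow_left₀ (by positivity) hc n
  have hgeom : Summable (fun n : ℕ => r * c ^ n) :=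
    (summable_geometric_of_lt_one hc0 hc1).mul_left r
  have hsum : Summable f := Summable.of_norm_bounded hgeom hterm
  have hsumnorm : Summable (fun n : ℕ => ‖f n‖) :=
    Summable.of_nonneg_of_le (fun n => norm_nonneg _) hterm hgeom
  have htsumgeom : ∑' n : ℕ, r * c ^ n = r / (1 - c) := by
    rw [tsum_mul_left, tsum_geometric_of_lt_one hc0 hc1, div_eq_mul_inv]
  constructor
  · have hf0 : f 0 = q := by simp [hf, sigma'_one]
    have hsplit : (∑' n : ℕ, f n) - q = ∑' n : ℕ, f (n + 1) := by
      rw [hsum.tsum_eq_zero_add, hf0]; ring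
    rw [hsplit]
    have hsumnorm' : Summable (fun n : ℕ => ‖f (n + 1)‖) :=
      (summable_nat_add_iff 1).2 hsumnorm
    have hgeom' : Summable (fun n : ℕ => r * c * c ^ n) :=
      (summable_geometric_of_lt_one hc0 hc1).mul_left (r * c)
    calc ‖∑' n : ℕ, f (n + 1)‖
        ≤ ∑' n : ℕ, ‖f (n + 1)‖ := norm_tsum_le_tsum_norm hsumnorm'
      _ ≤ ∑' n : ℕ, r * c * c ^ n := by
          apply Summable.tsum_le_tsum _ hsumnorm' hgeom'
          intro n
          calc ‖f (n + 1)‖ ≤ r * c ^ (n + 1) := hterm (n + 1)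
            _ = r * c * c ^ n := by ring
      _ = r * c / (1 - c) := by
          rw [tsum_mul_left, tsum_geometric_of_lt_one hc0 hc1, div_eq_mul_inv]
  · calc ‖∑' n : ℕ, f n‖
        ≤ ∑' n : ℕ, ‖f n‖ := norm_tsum_le_tsum_norm hsumnorm
      _ ≤ ∑' n : ℕ, r * c ^ n := Summable.tsum_le_tsum hterm hsumnorm hgeom
      _ = r / (1 - c) := htsumgeom

lemma main_est (q A B : ℂ) (r : ℝ) (hr : ‖q‖ = r) (hr0 : 0 < r) (hr200 : r ≤ 1/200)
    (hA : ‖A‖ ≤ 2 * r) (hAq : ‖A - q‖ ≤ 32 * r ^ 2)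
    (hB : ‖B‖ ≤ 2 * r) (hBq : ‖B - q‖ ≤ 128 * r ^ 2) :
    ‖(((1 + 240 * A) ^ 3 - (1 - 504 * B) ^ 2) / 1728 - q) / q ^ 2‖ < 23546 := by
  have key : ((1 + 240 * A) ^ 3 - (1 - 504 * B) ^ 2) / 1728 - q
      = (720 * (A - q) + 1008 * (B - q) + 172800 * A ^ 2 + 13824000 * A ^ 3
          - 254016 * B ^ 2) / 1728 := by ring
  rw [key, div_div, norm_div, norm_mul, norm_pow, hr]
  have h1728 : ‖(1728:ℂ)‖ = 1728 := by norm_num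
  rw [h1728]
  rw [div_lt_iff₀ (by positivity)]
  have hN : ‖720 * (A - q) + 1008 * (B - q) + 172800 * A ^ 2 + 13824000 * A ^ 3
      - 254016 * B ^ 2‖ ≤ 720 * ‖A - q‖ + 1008 * ‖B - q‖
      + 172800 * ‖A‖ ^ 2 + 13824000 * ‖A‖ ^ 3
      + 254016 * ‖B‖ ^ 2 := by
    calc ‖720 * (A - q) + 1008 * (B - q) + 172800 * A ^ 2 + 13824000 * A ^ 3 - 254016 * B ^ 2‖
        ≤ ‖720 * (A - q) + 1008 * (B - q) + 172800 * A ^ 2 + 13824000 * A ^ 3‖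
            + ‖254016 * B ^ 2‖ := norm_sub_le _ _
      _ ≤ ‖720 * (A - q) + 1008 * (B - q) + 172800 * A ^ 2‖ + ‖13824000 * A ^ 3‖
            + ‖254016 * B ^ 2‖ := by gcongr; exact norm_add_le _ _
      _ ≤ ‖720 * (A - q) + 1008 * (B - q)‖ + ‖172800 * A ^ 2‖ + ‖13824000 * A ^ 3‖
            + ‖254016 * B ^ 2‖ := by gcongr; exact norm_add_le _ _
      _ ≤ ‖720 * (A - q)‖ + ‖1008 * (B - q)‖ + ‖172800 * A ^ 2‖ + ‖13824000 * A ^ 3‖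
            + ‖254016 * B ^ 2‖ := by gcongr; exact norm_add_le _ _
      _ = 720 * ‖A - q‖ + 1008 * ‖B - q‖ + 172800 * ‖A‖ ^ 2 + 13824000 * ‖A‖ ^ 3
            + 254016 * ‖B‖ ^ 2 := by
          simp [norm_mul, norm_pow]
  have hA0 : 0 ≤ ‖A‖ := norm_nonneg A
  have hB0 : 0 ≤ ‖B‖ := norm_nonneg B
  have hA2 : ‖A‖ ^ 2 ≤ 4 * r ^ 2 := by nlinarith
  have hA3 : ‖A‖ ^ 3 ≤ 8 * r ^ 3 := by nlinarith
  have hB2 : ‖B‖ ^ 2 ≤ 4 * r ^ 2 := by nlinarith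
  have hr3 : r ^ 3 ≤ r ^ 2 / 200 := by nlinarith
  nlinarith [sq_nonneg r, mul_pos hr0 hr0]

/-- For `√3/2 ≤ Im τ ≤ 1.5`, `|(Δ(τ) - q)/q²| < 23546`. -/
theorem disc_tail_bound_low (τ : ℂ) (hτ₁ : Real.sqrt 3 / 2 ≤ τ.im) (hτ₂ : τ.im ≤ 1.5) :
    ‖(Δ' τ - qpar τ) / qpar τ ^ 2‖ < 23546 := by
  set q := qpar τ with hq
  set r := ‖q‖ with hr
  have hr_eq : r = Real.exp (-(2 * Real.pi * τ.im)) := by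
    rw [hr, hq, qpar, Complex.norm_exp]
    congr 1
    simp [Complex.mul_re, Complex.mul_im]
  have hr0 : 0 < r := by rw [hr_eq]; exact Real.exp_pos _
  have hπ : (3.141592 : ℝ) < Real.pi := Real.pi_gt_d6
  have hs3 : (1.732 : ℝ) ≤ Real.sqrt 3 := by
    rw [show (1.732:ℝ) = Real.sqrt (1.732 ^ 2) from (Real.sqrt_sq (by norm_num)).symm]
    exact Real.sqrt_le_sqrt (by norm_num)
  have h544 : (5.44 : ℝ) ≤ 2 * Real.pi * τ.im := by nlinarith
  have hexp200 : (200 : ℝ) ≤ Real.exp (2 * Real.pi * τ.im) := by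
    have h1 : Real.exp 5.44 ≤ Real.exp (2 * Real.pi * τ.im) := Real.exp_le_exp.2 h544
    have h2 : Real.exp 5.44 = Real.exp 1 ^ 5 * Real.exp 0.44 := by
      rw [← Real.exp_nat_mul, ← Real.exp_add]; norm_num
    have h3 : (1.44 : ℝ) ≤ Real.exp 0.44 := by
      have := Real.add_one_le_exp (0.44 : ℝ); linarith
    have h4 : (2.7182818283 : ℝ) ^ 5 ≤ Real.exp 1 ^ 5 :=
      pow_le_pow_left₀ (by norm_num) Real.exp_one_gt_d9.le 5
    have h5 : (200 : ℝ) ≤ Real.exp 1 ^ 5 * Real.exp 0.44 := by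
      have hp : (0:ℝ) < Real.exp 1 ^ 5 := by positivity
      nlinarith
    linarith
  have hr200 : r ≤ 1 / 200 := by
    rw [hr_eq, Real.exp_neg]
    rw [show (1:ℝ)/200 = ((200:ℝ))⁻¹ by norm_num]
    exact inv_anti₀ (by norm_num) hexp200
  have h16 : 16 * r < 1 := by linarith
  have h64 : 64 * r < 1 := by linarith
  obtain ⟨hAq, hA⟩ := tsum_bounds 3 q (16 * r) (by rw [← hr]; norm_num) h16
  obtain ⟨hBq, hB⟩ := tsum_bounds 5 q (64 * r) (by rw [← hr]; norm_num) h64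
  rw [← hr] at hAq hA hBq hB
  have hA' : ‖∑' n : ℕ, ((sigma' 3 (n + 1) : ℂ) * q ^ (n + 1))‖ ≤ 2 * r := by
    refine le_trans hA ?_
    rw [div_le_iff₀ (by linarith)]
    nlinarith
  have hAq' : ‖(∑' n : ℕ, ((sigma' 3 (n + 1) : ℂ) * q ^ (n + 1))) - q‖
      ≤ 32 * r ^ 2 := by
    refine le_trans hAq ?_
    rw [div_le_iff₀ (by linarith)]
    nlinarith
  have hB' : ‖∑' n : ℕ, ((sigma' 5 (n + 1) : ℂ) * q ^ (n + 1))‖ ≤ 2 * r := by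
    refine le_trans hB ?_
    rw [div_le_iff₀ (by linarith)]
    nlinarith
  have hBq' : ‖(∑' n : ℕ, ((sigma' 5 (n + 1) : ℂ) * q ^ (n + 1))) - q‖
      ≤ 128 * r ^ 2 := by
    refine le_trans hBq ?_
    rw [div_le_iff₀ (by linarith)]
    nlinarith
  show ‖(Δ' τ - q) / q ^ 2‖ < 23546
  unfold Δ' E4 E6
  exact main_est q _ _ r hr.symm hr0 hr200 hA' hAq' hB' hBq'
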